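/- The following identity holds in R_l: χ(l−1,0)·χ(l−1,2) = χ(l−2,2)·Z + 1 + χ(l−2,2)². (Lemma 2.6: the (l−1)-st equation of the T-system for ε-characters acquires the extra term χ(l−2,2)²; it is the generalised exchange relation of the cluster algebra 𝒜_{l−1}.) -/
import Mathlib


/-!
`Rl l` is the Laurent polynomial ring over `ℤ` in `l` commuting variables
`Y_0, Y_2, …, Y_{2l−2}`, with the index of `Y` read modulo `2l`.  It is realised
as the group algebra of the free abelian group `ZMod l →₀ ℤ`, the variable with
even index `n` corresponding to the residue `n/2` modulo `l`.
-/

/-- The Laurent polynomial ring `ℤ[Y_0^{±1}, Y_2^{±1}, …, Y_{2l−2}^{±1}]`,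
indices read modulo `2l`. -/
abbrev Rl (l : ℕ) : Type := AddMonoidAlgebra ℤ (ZMod l →₀ ℤ)

/-- The monomial `Y_n^e` (for `n` an even integer, read modulo `2l`). -/
noncomputable def Y (l : ℕ) (n e : ℤ) : Rl l :=
  AddMonoidAlgebra.single (Finsupp.single ((n / 2 : ℤ) : ZMod l) e) 1

/-- The `ε`-character `χ(k,a)` of the Kirillov–Reshetikhin module `W_ε(k,ε^a)`:
`χ(k,a) = Σ_{i=0}^{k} (Π_{t=0}^{k−1−i} Y_{a+2t}) · (Π_{t=k+1−i}^{k} Y_{a+2t}^{−1})`. -/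
noncomputable def chi (l : ℕ) (k : ℕ) (a : ℤ) : Rl l :=
  ∑ i ∈ Finset.range (k + 1),
    (∏ t ∈ Finset.range (k - i), Y l (a + 2 * (t : ℤ)) 1) *
      ∏ t ∈ Finset.Icc (k + 1 - i) k, Y l (a + 2 * (t : ℤ)) (-1)

/-- `Z = Y_0Y_2⋯Y_{2l−2} + (Y_0Y_2⋯Y_{2l−2})^{−1}`, the `ε`-character of the
Frobenius pullback `z₁ = L(𝐘₁)`. -/
noncomputable def Z (l : ℕ) : Rl l :=
  (∏ t ∈ Finset.range l, Y l (2 * (t : ℤ)) 1) +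
    ∏ t ∈ Finset.range l, Y l (2 * (t : ℤ)) (-1)

open Finset

lemma Y_congr (l : ℕ) {n n' : ℤ} (e : ℤ) (h : n = n') : Y l n e = Y l n' e := by rw [h]

lemma Y_mul_Y_inv (l : ℕ) (n : ℤ) : Y l n 1 * Y l n (-1) = 1 := by
  unfold Y
  rw [AddMonoidAlgebra.single_mul_single, ← Finsupp.single_add]
  norm_num
  rfl

lemma prod_Icc_shift {M : Type*} [CommMonoid M] (f : ℕ → M) (m n : ℕ) :
    ∏ t ∈ Icc (m+1) (n+1), f t = ∏ t ∈ Icc m n, f (t+1) := by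
  rw [← Finset.map_add_right_Icc, Finset.prod_map]; rfl

lemma prod_Icc_one {M : Type*} [CommMonoid M] (f : ℕ → M) (k : ℕ) :
    ∏ t ∈ Icc 1 (k+1), f t = ∏ t ∈ range (k+1), f (t+1) := by
  have h0 : Finset.Icc 0 k = Finset.range (k+1) := by ext x; simp [Nat.lt_succ_iff]
  have h := prod_Icc_shift f 0 k
  simpa [h0] using h

lemma prod_pair_inv (l : ℕ) (s : Finset ℕ) (g : ℕ → ℤ) :
    (∏ t ∈ s, Y l (g t) 1) * (∏ t ∈ s, Y l (g t) (-1)) = 1 := by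
  rw [← Finset.prod_mul_distrib]
  simp [Y_mul_Y_inv]

lemma R1 (l k : ℕ) (a : ℤ) :
    chi l (k+1) a = Y l a 1 * chi l k (a+2) +
      ∏ t ∈ Icc 1 (k+1), Y l (a + 2*(t:ℤ)) (-1) := by
  unfold chi
  rw [Finset.sum_range_succ]
  congr 1
  · rw [Finset.mul_sum]
    refine Finset.sum_congr rfl fun i hi => ?_
    rw [Finset.mem_range] at hi
    have h1 : k + 1 - i = (k - i) + 1 := by omega
    have h2 : k + 1 + 1 - i = (k + 1 - i) + 1 := by omega
    rw [h2, prod_Icc_shift, h1, Finset.prod_range_succ']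
    have e1 : ∀ t : ℕ, Y l (a + 2*((t+1:ℕ):ℤ)) 1 = Y l (a + 2 + 2*(t:ℤ)) 1 := by
      intro t; apply Y_congr; push_cast; ring
    have e2 : ∀ t : ℕ, Y l (a + 2*((t+1:ℕ):ℤ)) (-1) = Y l (a + 2 + 2*(t:ℤ)) (-1) := by
      intro t; apply Y_congr; push_cast; ring
    simp only [e1, e2, Nat.cast_zero, mul_zero, add_zero]
    ring
  · simp

lemma R2 (l k : ℕ) (a : ℤ) :
    chi l (k+1) a = Y l (a + 2*((k:ℤ)+1)) (-1) * chi l k a +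
      ∏ t ∈ range (k+1), Y l (a + 2*(t:ℤ)) 1 := by
  unfold chi
  rw [Finset.sum_range_succ']
  congr 1
  · rw [Finset.mul_sum]
    refine Finset.sum_congr rfl fun i hi => ?_
    rw [Finset.mem_range] at hi
    have h1 : k + 1 - (i+1) = k - i := by omega
    have h2 : k + 1 + 1 - (i+1) = (k - i) + 1 + i + 1 - (i + 1) := by omega
    have h3 : k + 1 + 1 - (i+1) = k + 1 - i := by omega
    rw [h1, h3, Finset.prod_Icc_succ_top (by omega : k + 1 - i ≤ k + 1)]
    have e : Y l (a + 2*((k+1:ℕ):ℤ)) (-1) = Y l (a + 2*((k:ℤ)+1)) (-1) := by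
      apply Y_congr; push_cast; ring
    rw [e]; ring
  · rw [Finset.Icc_eq_empty (by omega)]
    simp

lemma Tsys (l m : ℕ) (a : ℤ) :
    chi l (m+1) a * chi l (m+1) (a+2) = chi l (m+2) a * chi l m (a+2) + 1 := by
  have h1 := R1 l m a
  have h2 := R1 l (m+1) a
  have h3 := R2 l m (a+2)
  set M := ∏ t ∈ Icc 1 (m+1), Y l (a + 2*(t:ℤ)) (-1) with hM
  have hN : (∏ t ∈ Icc 1 (m+1+1), Y l (a + 2*(t:ℤ)) (-1))
      = M * Y l (a + 2 + 2*((m:ℤ)+1)) (-1) := by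
    rw [Finset.prod_Icc_succ_top (by omega : 1 ≤ m+1+1)]
    congr 1
    apply Y_congr; push_cast; ring
  have hMP : M * (∏ t ∈ range (m+1), Y l (a + 2 + 2*(t:ℤ)) 1) = 1 := by
    rw [hM, prod_Icc_one]
    have e : ∀ t : ℕ, Y l (a + 2*((t+1:ℕ):ℤ)) (-1) = Y l (a + 2 + 2*(t:ℤ)) (-1) := by
      intro t; apply Y_congr; push_cast; ring
    simp only [e]
    rw [mul_comm]
    exact prod_pair_inv l _ _
  rw [h1, h2, h3, hN]
  have e2 : ∀ t : ℕ, Y l (a + 2 + 2*(t:ℤ)) 1 = Y l (a + 2 + 2*(t:ℤ)) 1 := fun _ => rfl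
  linear_combination hMP

lemma Y_wrap (m : ℕ) (e : ℤ) : Y (m+2) (2*(((m+2:ℕ)):ℤ)) e = Y (m+2) 0 e := by
  unfold Y
  congr 2
  have h : (2*(((m+2:ℕ)):ℤ)) / 2 = ((m+2:ℕ) : ℤ) := by
    rw [Int.mul_ediv_cancel_left _ (by norm_num)]
  rw [h]
  have h2 := ZMod.natCast_self (m+2)
  push_cast at h2 ⊢
  linear_combination h2

lemma wrap (m : ℕ) : chi (m+2) (m+2) 0 = Z (m+2) + chi (m+2) m 2 := by
  unfold chi Z
  rw [Finset.sum_range_succ, Finset.sum_range_succ']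
  have hA : ((∏ t ∈ range (m+2-0), Y (m+2) ((0:ℤ)+2*(t:ℤ)) 1) *
      ∏ t ∈ Icc (m+2+1-0) (m+2), Y (m+2) ((0:ℤ)+2*(t:ℤ)) (-1))
      = ∏ t ∈ range (m+2), Y (m+2) (2*(t:ℤ)) 1 := by
    rw [Finset.Icc_eq_empty (by omega), Finset.prod_empty, mul_one]
    exact Finset.prod_congr rfl fun t _ => Y_congr _ _ (by ring)
  have hF : ((∏ t ∈ range (m+2-(m+2)), Y (m+2) ((0:ℤ)+2*(t:ℤ)) 1) *
      ∏ t ∈ Icc (m+2+1-(m+2)) (m+2), Y (m+2) ((0:ℤ)+2*(t:ℤ)) (-1))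
      = ∏ t ∈ range (m+2), Y (m+2) (2*(t:ℤ)) (-1) := by
    have b0 : m+2-(m+2) = 0 := by omega
    have b1 : m+2+1-(m+2) = 1 := by omega
    rw [b0, b1, Finset.range_zero, Finset.prod_empty, one_mul]
    have hsplit : ∏ t ∈ Icc 1 (m+2), Y (m+2) ((0:ℤ)+2*(t:ℤ)) (-1)
        = (∏ t ∈ Icc 1 (m+1), Y (m+2) ((0:ℤ)+2*(t:ℤ)) (-1)) *
          Y (m+2) ((0:ℤ)+2*((m+2:ℕ):ℤ)) (-1) :=
      Finset.prod_Icc_succ_top (by omega) _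
    have hsplit2 : ∏ t ∈ range (m+2), Y (m+2) (2*(t:ℤ)) (-1)
        = (∏ t ∈ range (m+1), Y (m+2) (2*((t+1:ℕ):ℤ)) (-1)) * Y (m+2) (2*((0:ℕ):ℤ)) (-1) :=
      Finset.prod_range_succ' _ (m+1)
    rw [hsplit, hsplit2, prod_Icc_one]
    congr 1
    · exact Finset.prod_congr rfl fun t _ => Y_congr _ _ (by push_cast; ring)
    · have h1 : Y (m+2) ((0:ℤ)+2*((m+2:ℕ):ℤ)) (-1) = Y (m+2) 0 (-1) := by
        rw [← Y_wrap m (-1)]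
        exact Y_congr _ _ (by push_cast; ring)
      have h2 : Y (m+2) (2*((0:ℕ):ℤ)) (-1) = Y (m+2) 0 (-1) :=
        Y_congr _ _ (by norm_num)
      rw [h1, h2]
  have hmid : ∀ i ∈ range (m+1),
      ((∏ t ∈ range (m+2-(i+1)), Y (m+2) ((0:ℤ)+2*(t:ℤ)) 1) *
        ∏ t ∈ Icc (m+2+1-(i+1)) (m+2), Y (m+2) ((0:ℤ)+2*(t:ℤ)) (-1))
      = (∏ t ∈ range (m-i), Y (m+2) ((2:ℤ)+2*(t:ℤ)) 1) *
        ∏ t ∈ Icc (m+1-i) m, Y (m+2) ((2:ℤ)+2*(t:ℤ)) (-1) := by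
    intro i hi
    rw [Finset.mem_range] at hi
    have b1 : m+2-(i+1) = (m-i)+1 := by omega
    have b2 : m+2+1-(i+1) = m+2-i := by omega
    have hsplit : ∏ t ∈ Icc (m+2-i) (m+2), Y (m+2) ((0:ℤ)+2*(t:ℤ)) (-1)
        = (∏ t ∈ Icc (m+2-i) (m+1), Y (m+2) ((0:ℤ)+2*(t:ℤ)) (-1)) *
          Y (m+2) ((0:ℤ)+2*((m+2:ℕ):ℤ)) (-1) :=
      Finset.prod_Icc_succ_top (by omega) _
    have b3 : m+2-i = (m+1-i)+1 := by omega
    rw [b1, b2, Finset.prod_range_succ', hsplit, b3, prod_Icc_shift]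
    have e1 : ∀ t : ℕ, Y (m+2) ((0:ℤ)+2*((t+1:ℕ):ℤ)) 1 = Y (m+2) ((2:ℤ)+2*(t:ℤ)) 1 :=
      fun t => Y_congr _ _ (by push_cast; ring)
    have e2 : ∀ t : ℕ, Y (m+2) ((0:ℤ)+2*((t+1:ℕ):ℤ)) (-1) = Y (m+2) ((2:ℤ)+2*(t:ℤ)) (-1) :=
      fun t => Y_congr _ _ (by push_cast; ring)
    have e3 : Y (m+2) ((0:ℤ)+2*((m+2:ℕ):ℤ)) (-1) = Y (m+2) 0 (-1) := by
      rw [← Y_wrap m (-1)]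
      exact Y_congr _ _ (by push_cast; ring)
    have e4 : Y (m+2) ((0:ℤ)+2*((0:ℕ):ℤ)) 1 = Y (m+2) 0 1 :=
      Y_congr _ _ (by norm_num)
    have e5 : Y (m+2) ((2:ℤ)+2*((m+1:ℕ):ℤ)) (-1) = Y (m+2) 0 (-1) := by
      rw [← Y_wrap m (-1)]
      exact Y_congr _ _ (by push_cast; ring)
    simp only [e1, e2, e3, e4, e5]
    have hY : Y (m+2) 0 1 * Y (m+2) 0 (-1) = 1 := Y_mul_Y_inv _ _
    linear_combination (∏ t ∈ range (m-i), Y (m+2) ((2:ℤ)+2*(t:ℤ)) 1) *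
      (∏ t ∈ Icc (m+1-i) m, Y (m+2) ((2:ℤ)+2*(t:ℤ)) (-1)) * hY
  rw [Finset.sum_congr rfl hmid, hA, hF]
  ring

/-- Lemma 2.6 (generalised exchange relation):
`χ(l−1,0)·χ(l−1,2) = χ(l−2,2)·Z + 1 + χ(l−2,2)²`. -/
theorem generalized_exchange (l : ℕ) (hl : 2 ≤ l) :
    chi l (l - 1) 0 * chi l (l - 1) 2 =
      chi l (l - 2) 2 * Z l + 1 + chi l (l - 2) 2 ^ 2 := by
  obtain ⟨m, rfl⟩ : ∃ m, l = m + 2 := ⟨l - 2, by omega⟩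
  have h1 : m + 2 - 1 = m + 1 := by omega
  have h2 : m + 2 - 2 = m := by omega
  rw [h1, h2]
  have ht := Tsys (m+2) m 0
  norm_num at ht
  rw [ht, wrap m]
  ring
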